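/- Let G = (V, E) be a finite DAG with |V| = n, and let B be the bipartite graph with parts V1 = {x_v : v ∈ V} and V2 = {y_v : v ∈ V}, where x_u is adjacent to y_w if and only if w is strictly reachable from u in G. If M is a maximum matching of B, then the width of G equals n − |M| (the correctness of Fulkerson's method for computing the width of a DAG). -/
import Mathlib


variable {V : Type*}

/-- An antichain: a finite set of pairwise mutually unreachable vertices. -/
def IsAntichainSet (E : V → V → Prop) (A : Finset V) : Prop :=
  ∀ u ∈ A, ∀ u' ∈ A, u ≠ u' →
    ¬ Relation.ReflTransGen E u u' ∧ ¬ Relation.ReflTransGen E u' u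

/-- `w` is the width of the DAG: the maximum cardinality of an antichain. -/
def IsWidth (E : V → V → Prop) (w : ℕ) : Prop :=
  (∃ A : Finset V, IsAntichainSet E A ∧ A.card = w) ∧
    ∀ A : Finset V, IsAntichainSet E A → A.card ≤ w

/-- A matching of the bipartite graph whose parts are two copies of `V` and whose
edges join `u` to `w` exactly when `w` is strictly reachable from `u`:
a set of such edges, pairwise disjoint in both endpoints. -/
def IsReachMatching (E : V → V → Prop) (M : Finset (V × V)) : Prop :=
  (∀ p ∈ M, Relation.TransGen E p.1 p.2) ∧
    ∀ p ∈ M, ∀ q ∈ M, p ≠ q → p.1 ≠ q.1 ∧ p.2 ≠ q.2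

namespace Fulk

variable {V : Type*} [DecidableEq V] {lt : V → V → Prop}




/-- pairwise comparable -/
def ChainF (lt : V → V → Prop) (C : Finset V) : Prop :=
  ∀ x ∈ C, ∀ y ∈ C, x ≠ y → lt x y ∨ lt y x

/-- pairwise incomparable -/
def AntiF (lt : V → V → Prop) (A : Finset V) : Prop :=
  ∀ u ∈ A, ∀ v ∈ A, u ≠ v → ¬ lt u v ∧ ¬ lt v u

/-- partition of S into nonempty chains -/
def IsChainPart (lt : V → V → Prop) (S : Finset V) (P : Finset (Finset V)) : Prop :=
  (∀ C ∈ P, C ⊆ S ∧ C.Nonempty ∧ ChainF lt C) ∧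
  (∀ x ∈ S, ∃ C ∈ P, x ∈ C) ∧
  (∀ C ∈ P, ∀ D ∈ P, C ≠ D → ∀ x, x ∈ C → x ∉ D)

lemma exists_maximal (htrans : Transitive lt) (hirr : Irreflexive lt)
    (S : Finset V) (hS : S.Nonempty) : ∃ m ∈ S, ∀ x ∈ S, ¬ lt m x := by
  classical
  induction S using Finset.induction_on with
  | empty => simp at hS
  | @insert a s ha ih =>
    rcases s.eq_empty_or_nonempty with rfl | hs
    · exact ⟨a, by simp, by simp [fun h => hirr a h]⟩
    · obtain ⟨m, hm, hmax⟩ := ih hs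
      by_cases hma : lt m a
      · refine ⟨a, Finset.mem_insert_self _ _, ?_⟩
        intro x hx hax
        rcases Finset.mem_insert.1 hx with rfl | hx
        · exact hirr x hax
        · exact hmax x hx (htrans hma hax)
      · refine ⟨m, Finset.mem_insert_of_mem hm, ?_⟩
        intro x hx hmx
        rcases Finset.mem_insert.1 hx with rfl | hx
        · exact hma hmx
        · exact hmax x hx hmx

lemma chain_exists_max (htrans : Transitive lt) (hirr : Irreflexive lt)
    {C : Finset V} (hC : ChainF lt C) (hne : C.Nonempty) :
    ∃ m ∈ C, ∀ x ∈ C, x ≠ m → lt x m := by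
  obtain ⟨m, hm, hmax⟩ := exists_maximal htrans hirr C hne
  refine ⟨m, hm, fun x hx hxm => ?_⟩
  rcases hC x hx m hm hxm with h | h
  · exact h
  · exact absurd h (hmax x hx)

lemma chain_exists_min (htrans : Transitive lt) (hirr : Irreflexive lt)
    {C : Finset V} (hC : ChainF lt C) (hne : C.Nonempty) :
    ∃ m ∈ C, ∀ x ∈ C, x ≠ m → lt m x := by
  obtain ⟨m, hm, hmax⟩ := exists_maximal (lt := fun a b => lt b a)
    (fun _ _ _ h h' => htrans h' h) (fun a h => hirr a h) C hne
  refine ⟨m, hm, fun x hx hxm => ?_⟩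
  rcases hC x hx m hm hxm with h | h
  · exact absurd h (hmax x hx)
  · exact h

lemma anti_card_le {A S : Finset V} {P : Finset (Finset V)}
    (hA : AntiF lt A) (hAS : A ⊆ S) (hP : IsChainPart lt S P) :
    A.card ≤ P.card := by
  classical
  have hsub : A ⊆ P.biUnion (fun C => A ∩ C) := by
    intro a ha
    obtain ⟨C, hC, haC⟩ := hP.2.1 a (hAS ha)
    exact Finset.mem_biUnion.2 ⟨C, hC, Finset.mem_inter.2 ⟨ha, haC⟩⟩
  calc A.card ≤ ∑ C ∈ P, (A ∩ C).card :=
        (Finset.card_le_card hsub).trans Finset.card_biUnion_le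
    _ ≤ ∑ _C ∈ P, 1 := by
        refine Finset.sum_le_sum fun C hC => Finset.card_le_one.2 ?_
        intro x hx y hy
        by_contra hxy
        have hx' := Finset.mem_inter.1 hx
        have hy' := Finset.mem_inter.1 hy
        rcases (hP.1 C hC).2.2 x hx'.2 y hy'.2 hxy with h | h
        · exact (hA x hx'.1 y hy'.1 hxy).1 h
        · exact (hA x hx'.1 y hy'.1 hxy).2 h
    _ = P.card := by simp

lemma anti_meets {A S : Finset V} {P : Finset (Finset V)}
    (hA : AntiF lt A) (hAS : A ⊆ S) (hP : IsChainPart lt S P)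
    (hcard : A.card = P.card) : ∀ C ∈ P, ∃ x ∈ A, x ∈ C := by
  classical
  intro C hC
  by_contra hnone
  push_neg at hnone
  have hsub : A ⊆ (P.erase C).biUnion (fun D => A ∩ D) := by
    intro a ha
    obtain ⟨D, hD, haD⟩ := hP.2.1 a (hAS ha)
    have hDC : D ≠ C := by rintro rfl; exact hnone a ha haD
    exact Finset.mem_biUnion.2 ⟨D, Finset.mem_erase.2 ⟨hDC, hD⟩,
      Finset.mem_inter.2 ⟨ha, haD⟩⟩
  have h1 : A.card ≤ (P.erase C).card := by
    calc A.card ≤ ∑ D ∈ P.erase C, (A ∩ D).card :=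
          (Finset.card_le_card hsub).trans Finset.card_biUnion_le
      _ ≤ ∑ _D ∈ P.erase C, 1 := by
          refine Finset.sum_le_sum fun D hD => Finset.card_le_one.2 ?_
          intro x hx y hy
          by_contra hxy
          have hx' := Finset.mem_inter.1 hx
          have hy' := Finset.mem_inter.1 hy
          rcases (hP.1 D (Finset.mem_of_mem_erase hD)).2.2 x hx'.2 y hy'.2 hxy with h | h
          · exact (hA x hx'.1 y hy'.1 hxy).1 h
          · exact (hA x hx'.1 y hy'.1 hxy).2 h
      _ = (P.erase C).card := by simp
  have h2 : (P.erase C).card < P.card := Finset.card_erase_lt_of_mem hC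
  omega





def GoodM (lt : V → V → Prop) (M : Finset (V × V)) : Prop :=
  (∀ p ∈ M, lt p.1 p.2) ∧ ∀ p ∈ M, ∀ q ∈ M, p ≠ q → p.1 ≠ q.1 ∧ p.2 ≠ q.2

lemma matching_of_chain (htrans : Transitive lt) (hirr : Irreflexive lt) :
    ∀ n (C : Finset V), C.card = n → ChainF lt C → C.Nonempty →
    ∃ M : Finset (V × V), GoodM lt M ∧ (∀ p ∈ M, p.1 ∈ C ∧ p.2 ∈ C) ∧
      M.card + 1 = C.card := by
  intro n
  induction n using Nat.strong_induction_on with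
  | _ n ih =>
    intro C hcard hC hne
    obtain ⟨m, hm, hmin⟩ := chain_exists_min htrans hirr hC hne
    rcases (C.erase m).eq_empty_or_nonempty with he | hne'
    · refine ⟨∅, ⟨by simp, by simp⟩, by simp, ?_⟩
      have : C = {m} := by
        apply Finset.eq_singleton_iff_unique_mem.2
        exact ⟨hm, fun x hx => by
          by_contra hxm
          exact (Finset.eq_empty_iff_forall_notMem.1 he) x (Finset.mem_erase.2 ⟨hxm, hx⟩)⟩
      simp [this]
    · have hC' : ChainF lt (C.erase m) := fun x hx y hy hxy =>
        hC x (Finset.mem_of_mem_erase hx) y (Finset.mem_of_mem_erase hy) hxy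
      have hclt : (C.erase m).card < n := by
        have := Finset.card_erase_lt_of_mem hm; omega
      obtain ⟨M', hM'good, hM'mem, hM'card⟩ :=
        ih _ hclt (C.erase m) rfl hC' hne'
      obtain ⟨m', hm', hmin'⟩ := chain_exists_min htrans hirr hC' hne'
      have hmm' : m ≠ m' := by
        rintro rfl; exact (Finset.mem_erase.1 hm').1 rfl
      have hmnot : m ∉ C.erase m := fun h => (Finset.mem_erase.1 h).1 rfl
      refine ⟨insert (m, m') M', ⟨?_, ?_⟩, ?_, ?_⟩
      · intro p hp
        rcases Finset.mem_insert.1 hp with rfl | hp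
        · exact hmin m' (Finset.mem_of_mem_erase hm') (Ne.symm hmm')
        · exact hM'good.1 p hp
      · intro p hp q hq hpq
        have key : ∀ r ∈ M', (m, m').1 ≠ r.1 ∧ (m, m').2 ≠ r.2 := by
          intro r hr
          constructor
          · intro h
            apply hmnot
            have := (hM'mem r hr).1
            rw [← h] at this
            exact this
          · intro h
            have hr1 : r.1 ∈ C.erase m := (hM'mem r hr).1
            have hlt : lt r.1 m' := by simpa [← h] using hM'good.1 r hr
            have hr1m' : r.1 ≠ m' := fun h' => hirr m' (h' ▸ hlt)
            exact hirr r.1 (htrans hlt (hmin' r.1 hr1 hr1m'))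
        rcases Finset.mem_insert.1 hp with rfl | hp <;>
          rcases Finset.mem_insert.1 hq with rfl | hq
        · exact absurd rfl hpq
        · exact key q hq
        · exact ⟨(key p hp).1.symm, (key p hp).2.symm⟩
        · exact hM'good.2 p hp q hq hpq
      · intro p hp
        rcases Finset.mem_insert.1 hp with rfl | hp
        · exact ⟨hm, Finset.mem_of_mem_erase hm'⟩
        · exact ⟨Finset.mem_of_mem_erase (hM'mem p hp).1,
            Finset.mem_of_mem_erase (hM'mem p hp).2⟩
      · have hnotmem : (m, m') ∉ M' := by
          intro h; exact hmnot ((hM'mem _ h).1)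
        rw [Finset.card_insert_of_notMem hnotmem]
        have := Finset.card_erase_of_mem hm
        have hCpos : 0 < C.card := Finset.card_pos.2 hne
        omega

lemma matching_of_part (htrans : Transitive lt) (hirr : Irreflexive lt) :
    ∀ (P : Finset (Finset V)) (S : Finset V), IsChainPart lt S P →
    ∃ M : Finset (V × V), GoodM lt M ∧ (∀ p ∈ M, p.1 ∈ S ∧ p.2 ∈ S) ∧
      M.card + P.card = S.card := by
  intro P
  induction P using Finset.induction_on with
  | empty =>
    intro S hP
    have hS : S = ∅ := by
      rw [Finset.eq_empty_iff_forall_notMem]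
      intro x hx
      obtain ⟨C, hC, _⟩ := hP.2.1 x hx
      simp at hC
    refine ⟨∅, ⟨by simp, by simp⟩, by simp, by simp [hS]⟩
  | @insert C P' hCP ih =>
    intro S hP
    have hCmem : C ∈ insert C P' := Finset.mem_insert_self _ _
    obtain ⟨hCS, hCne, hCchain⟩ := hP.1 C hCmem
    set S' := S \ C with hS'def
    have hP' : IsChainPart lt S' P' := by
      refine ⟨fun D hD => ?_, fun x hx => ?_, fun D hD E₁ hE hDE => ?_⟩
      · obtain ⟨hDS, hDne, hDchain⟩ := hP.1 D (Finset.mem_insert_of_mem hD)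
        refine ⟨fun x hx => Finset.mem_sdiff.2 ⟨hDS hx, ?_⟩, hDne, hDchain⟩
        intro hxC
        exact hP.2.2 D (Finset.mem_insert_of_mem hD) C hCmem
          (by rintro rfl; exact hCP hD) x hx hxC
      · obtain ⟨D, hD, hxD⟩ := hP.2.1 x (Finset.mem_sdiff.1 hx).1
        rcases Finset.mem_insert.1 hD with rfl | hD
        · exact absurd hxD (Finset.mem_sdiff.1 hx).2
        · exact ⟨D, hD, hxD⟩
      · exact hP.2.2 D (Finset.mem_insert_of_mem hD) E₁
          (Finset.mem_insert_of_mem hE) hDE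
    obtain ⟨M', hM'good, hM'mem, hM'card⟩ := ih S' hP'
    obtain ⟨MC, hMCgood, hMCmem, hMCcard⟩ :=
      matching_of_chain htrans hirr C.card C rfl hCchain hCne
    have hdisj : ∀ p ∈ MC, p ∉ M' := by
      intro p hp hp'
      have h1 : p.1 ∈ C := (hMCmem p hp).1
      have h2 : p.1 ∈ S' := (hM'mem p hp').1
      exact (Finset.mem_sdiff.1 h2).2 h1
    refine ⟨MC ∪ M', ⟨?_, ?_⟩, ?_, ?_⟩
    · intro p hp
      rcases Finset.mem_union.1 hp with hp | hp
      · exact hMCgood.1 p hp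
      · exact hM'good.1 p hp
    · intro p hp q hq hpq
      have cross : ∀ r ∈ MC, ∀ s ∈ M', r.1 ≠ s.1 ∧ r.2 ≠ s.2 := by
        intro r hr s hs
        constructor
        · intro h
          exact (Finset.mem_sdiff.1 (hM'mem s hs).1).2 (h ▸ (hMCmem r hr).1)
        · intro h
          exact (Finset.mem_sdiff.1 (hM'mem s hs).2).2 (h ▸ (hMCmem r hr).2)
      rcases Finset.mem_union.1 hp with hp | hp <;>
        rcases Finset.mem_union.1 hq with hq | hq
      · exact hMCgood.2 p hp q hq hpq
      · exact cross p hp q hq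
      · exact ⟨(cross q hq p hp).1.symm, (cross q hq p hp).2.symm⟩
      · exact hM'good.2 p hp q hq hpq
    · intro p hp
      rcases Finset.mem_union.1 hp with hp | hp
      · exact ⟨hCS (hMCmem p hp).1, hCS (hMCmem p hp).2⟩
      · exact ⟨(Finset.mem_sdiff.1 (hM'mem p hp).1).1,
          (Finset.mem_sdiff.1 (hM'mem p hp).2).1⟩
    · have hcard : (MC ∪ M').card = MC.card + M'.card := by
        apply Finset.card_union_of_disjoint
        exact Finset.disjoint_left.2 hdisj
      have hins : (insert C P').card = P'.card + 1 :=
        by rw [Finset.card_insert_of_notMem hCP]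
      have hS'card : S'.card = S.card - C.card := Finset.card_sdiff_of_subset hCS
      have hCle : C.card ≤ S.card := Finset.card_le_card hCS
      omega





lemma part_of_matching (htrans : Transitive lt) (hirr : Irreflexive lt) :
    ∀ n (M : Finset (V × V)), M.card = n → ∀ (S : Finset V), GoodM lt M →
    (∀ p ∈ M, p.1 ∈ S ∧ p.2 ∈ S) →
    ∃ P : Finset (Finset V), IsChainPart lt S P ∧ P.card + M.card = S.card ∧
      (∀ x ∈ S, (∀ q ∈ M, q.1 ≠ x) → ∀ C ∈ P, x ∈ C → ∀ y ∈ C, y ≠ x → lt y x) := by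
  intro n
  induction n using Nat.strong_induction_on with
  | _ n ih =>
    intro M hMcard S hMgood hMS
    rcases M.eq_empty_or_nonempty with rfl | hMne
    · -- singletons
      refine ⟨S.image (fun x => {x}), ⟨?_, ?_, ?_⟩, ?_, ?_⟩
      · intro C hC
        obtain ⟨x, hx, rfl⟩ := Finset.mem_image.1 hC
        exact ⟨Finset.singleton_subset_iff.2 hx, Finset.singleton_nonempty x,
          fun a ha b hb hab => absurd (by
            rw [Finset.mem_singleton] at ha hb; rw [ha, hb]) hab⟩
      · intro x hx
        exact ⟨{x}, Finset.mem_image_of_mem _ hx, Finset.mem_singleton_self x⟩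
      · intro C hC D hD hCD x hxC hxD
        obtain ⟨a, _, rfl⟩ := Finset.mem_image.1 hC
        obtain ⟨b, _, rfl⟩ := Finset.mem_image.1 hD
        rw [Finset.mem_singleton] at hxC hxD
        exact hCD (by rw [← hxC, ← hxD])
      · rw [Finset.card_image_of_injective _ (fun a b h => by
          simpa using Finset.singleton_injective h)]
        simp
      · intro x hx _ C hC hxC y hyC hyx
        obtain ⟨a, _, rfl⟩ := Finset.mem_image.1 hC
        rw [Finset.mem_singleton] at hxC hyC
        exact absurd (hyC.trans hxC.symm) hyx
    · -- pick edge p with p.2 maximal among second coordinates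
      have hsne : (M.image Prod.snd).Nonempty := hMne.image _
      obtain ⟨b, hb, hbmax⟩ := exists_maximal htrans hirr _ hsne
      obtain ⟨p, hp, hpb⟩ := Finset.mem_image.1 hb
      have hb_not_fst : ∀ q ∈ M, q.1 ≠ b := by
        intro q hq h
        apply hbmax q.2 (Finset.mem_image_of_mem _ hq)
        rw [← h]
        exact hMgood.1 q hq
      set a := p.1 with ha_def
      have hab : lt a b := by rw [← hpb]; exact hMgood.1 p hp
      have haneb : a ≠ b := fun h => hirr b (h ▸ hab)
      set M' := M.erase p with hM'def
      set S' := S.erase b with hS'def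
      have hM'good : GoodM lt M' := ⟨fun q hq => hMgood.1 q (Finset.mem_of_mem_erase hq),
        fun q hq r hr => hMgood.2 q (Finset.mem_of_mem_erase hq) r (Finset.mem_of_mem_erase hr)⟩
      have hM'S' : ∀ q ∈ M', q.1 ∈ S' ∧ q.2 ∈ S' := by
        intro q hq
        have hqM := Finset.mem_of_mem_erase hq
        have hqp : q ≠ p := (Finset.mem_erase.1 hq).1
        constructor
        · exact Finset.mem_erase.2 ⟨hb_not_fst q hqM, (hMS q hqM).1⟩
        · refine Finset.mem_erase.2 ⟨?_, (hMS q hqM).2⟩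
          intro h
          exact (hMgood.2 q hqM p hp hqp).2 (h.trans hpb.symm)
      have hM'lt : M'.card < n := by
        have h1 : M'.card = (M.erase p).card := by rw [hM'def]
        have := Finset.card_erase_lt_of_mem hp; omega
      obtain ⟨P', hP', hP'card, hP'max⟩ := ih _ hM'lt M' rfl S' hM'good hM'S'
      -- a is in S', not a first coordinate of M'
      have haS : a ∈ S := (hMS p hp).1
      have hbS : b ∈ S := by rw [← hpb]; exact (hMS p hp).2
      have haS' : a ∈ S' := Finset.mem_erase.2 ⟨haneb, haS⟩
      have ha_not_fst' : ∀ q ∈ M', q.1 ≠ a := by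
        intro q hq h
        rcases eq_or_ne q p with rfl | hqp
        · exact (Finset.mem_erase.1 hq).1 rfl
        · exact (hMgood.2 q (Finset.mem_of_mem_erase hq) p hp hqp).1 h
      obtain ⟨Ca, hCa, haCa⟩ := hP'.2.1 a haS'
      have haMax : ∀ y ∈ Ca, y ≠ a → lt y a := hP'max a haS' ha_not_fst' Ca hCa haCa
      have hbnotS' : b ∉ S' := fun h => (Finset.mem_erase.1 h).1 rfl
      have hbnotCa : b ∉ Ca := fun h => hbnotS' ((hP'.1 Ca hCa).1 h)
      set Cb := insert b Ca with hCb_def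
      have hCbne : Cb ≠ Ca := by
        intro h; exact hbnotCa (h ▸ Finset.mem_insert_self b Ca)
      have hCbnot : Cb ∉ P'.erase Ca := by
        intro h
        have := (hP'.1 Cb (Finset.mem_of_mem_erase h)).1 (Finset.mem_insert_self b Ca)
        exact hbnotS' this
      set P := insert Cb (P'.erase Ca) with hP_def
      have hCblt : ∀ y ∈ Ca, lt y b := by
        intro y hy
        rcases eq_or_ne y a with rfl | hya
        · exact hab
        · exact htrans (haMax y hy hya) hab
      have hCbchain : ChainF lt Cb := by
        intro x hx y hy hxy
        rcases Finset.mem_insert.1 hx with hxb | hxCa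
        · rcases Finset.mem_insert.1 hy with hyb | hyCa
          · exact absurd (hxb.trans hyb.symm) hxy
          · subst hxb; exact Or.inr (hCblt y hyCa)
        · rcases Finset.mem_insert.1 hy with hyb | hyCa
          · subst hyb; exact Or.inl (hCblt x hxCa)
          · exact (hP'.1 Ca hCa).2.2 x hxCa y hyCa hxy
      have hmemP' : ∀ D ∈ P'.erase Ca, D ⊆ S' := fun D hD =>
        (hP'.1 D (Finset.mem_of_mem_erase hD)).1
      refine ⟨P, ⟨?_, ?_, ?_⟩, ?_, ?_⟩
      · intro C hC
        rcases Finset.mem_insert.1 hC with rfl | hC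
        · refine ⟨?_, ⟨b, Finset.mem_insert_self _ _⟩, hCbchain⟩
          intro x hx
          rcases Finset.mem_insert.1 hx with rfl | hx
          · exact hbS
          · exact Finset.mem_of_mem_erase ((hP'.1 Ca hCa).1 hx)
        · obtain ⟨hsub, hne, hch⟩ := hP'.1 C (Finset.mem_of_mem_erase hC)
          exact ⟨fun x hx => Finset.mem_of_mem_erase (hsub hx), hne, hch⟩
      · intro x hx
        rcases eq_or_ne x b with rfl | hxb
        · exact ⟨Cb, Finset.mem_insert_self _ _, Finset.mem_insert_self _ _⟩
        · obtain ⟨C, hC, hxC⟩ := hP'.2.1 x (Finset.mem_erase.2 ⟨hxb, hx⟩)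
          rcases eq_or_ne C Ca with rfl | hCCa
          · exact ⟨Cb, Finset.mem_insert_self _ _, Finset.mem_insert_of_mem hxC⟩
          · exact ⟨C, Finset.mem_insert_of_mem (Finset.mem_erase.2 ⟨hCCa, hC⟩), hxC⟩
      · -- disjointness
        have key : ∀ D ∈ P'.erase Ca, ∀ x, x ∈ Cb → x ∉ D := by
          intro D hD x hx hxD
          rcases Finset.mem_insert.1 hx with rfl | hx
          · exact hbnotS' (hmemP' D hD hxD)
          · exact hP'.2.2 Ca hCa D (Finset.mem_of_mem_erase hD)
              (Ne.symm (Finset.mem_erase.1 hD).1) x hx hxD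
        intro C hC D hD hCD x hxC hxD
        rcases Finset.mem_insert.1 hC with rfl | hC <;>
          rcases Finset.mem_insert.1 hD with rfl | hD
        · exact hCD rfl
        · exact key D hD x hxC hxD
        · exact key C hC x hxD hxC
        · exact hP'.2.2 C (Finset.mem_of_mem_erase hC) D (Finset.mem_of_mem_erase hD)
            hCD x hxC hxD
      · -- cardinality
        have h1 : P.card = (P'.erase Ca).card + 1 := Finset.card_insert_of_notMem hCbnot
        have h2 : (P'.erase Ca).card = P'.card - 1 := Finset.card_erase_of_mem hCa
        have h3 : 0 < P'.card := Finset.card_pos.2 ⟨Ca, hCa⟩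
        have h4 : M'.card = M.card - 1 := Finset.card_erase_of_mem hp
        have h5 : 0 < M.card := Finset.card_pos.2 hMne
        have h6 : S'.card = S.card - 1 := Finset.card_erase_of_mem hbS
        have h7 : 0 < S.card := Finset.card_pos.2 ⟨b, hbS⟩
        omega
      · -- max property
        intro x hx hx_not_fst C hC hxC y hyC hyx
        have hx_not_fst' : ∀ q ∈ M', q.1 ≠ x := fun q hq =>
          hx_not_fst q (Finset.mem_of_mem_erase hq)
        have hxa : x ≠ a := fun h => hx_not_fst p hp (h ▸ rfl)
        rcases Finset.mem_insert.1 hC with rfl | hC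
        · rcases Finset.mem_insert.1 hxC with rfl | hxCa
          · -- x = b : show every other elt of Cb is below b
            rcases Finset.mem_insert.1 hyC with hyb | hy
            · exact absurd hyb hyx
            · rcases eq_or_ne y a with rfl | hya
              · exact hab
              · exact htrans (haMax y hy hya) hab
          · -- x ∈ Ca, x ≠ a, x not first coord: contradiction with a's maximality
            have hxS' : x ∈ S' := (hP'.1 Ca hCa).1 hxCa
            have hxmax := hP'max x hxS' hx_not_fst' Ca hCa hxCa
            have h1 : lt a x := hxmax a haCa (Ne.symm hxa)
            have h2 : lt x a := haMax x hxCa hxa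
            exact absurd (htrans h1 h2) (hirr a)
        · have hC' := Finset.mem_of_mem_erase hC
          have hxS' : x ∈ S' := (hP'.1 C hC').1 hxC
          exact hP'max x hxS' hx_not_fst' C hC' hxC y hyC hyx





lemma dilworth (htrans : Transitive lt) (hirr : Irreflexive lt) :
    ∀ n (S : Finset V), S.card = n →
    ∃ (P : Finset (Finset V)) (A : Finset V),
      IsChainPart lt S P ∧ AntiF lt A ∧ A ⊆ S ∧ A.card = P.card := by
  classical
  intro n
  induction n using Nat.strong_induction_on with
  | _ n ih =>
    intro S hScard
    rcases S.eq_empty_or_nonempty with rfl | hSne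
    · refine ⟨∅, ∅, ⟨by simp, by simp, by simp⟩, by simp [AntiF], by simp, by simp⟩
    obtain ⟨m, hmS, hmmax⟩ := exists_maximal htrans hirr S hSne
    set S' := S.erase m with hS'def
    have hS'lt : S'.card < n := by
      have h1 : S'.card = (S.erase m).card := by rw [hS'def]
      have := Finset.card_erase_lt_of_mem hmS; omega
    obtain ⟨P', A', hP', hA', hA'S', hA'card⟩ := ih _ hS'lt S' rfl
    set d := P'.card with hd_def
    -- T C : elements of C that lie in some d-antichain of S'
    set T : Finset V → Finset V :=
      fun C => C.filter (fun x => ∃ B : Finset V, B ⊆ S' ∧ AntiF lt B ∧ B.card = d ∧ x ∈ B)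
      with hT_def
    have hTC_sub : ∀ C, T C ⊆ C := fun C => Finset.filter_subset _ _
    have hTC_ne : ∀ C ∈ P', (T C).Nonempty := by
      intro C hC
      obtain ⟨x, hxA', hxC⟩ := anti_meets hA' hA'S' hP' hA'card C hC
      exact ⟨x, Finset.mem_filter.2 ⟨hxC, A', hA'S', hA', hA'card, hxA'⟩⟩
    have hTC_max : ∀ C ∈ P', ∃ a ∈ T C, ∀ x ∈ T C, x ≠ a → lt x a := by
      intro C hC
      have hchain : ChainF lt (T C) := fun x hx y hy hxy =>
        (hP'.1 C hC).2.2 x (hTC_sub C hx) y (hTC_sub C hy) hxy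
      exact chain_exists_max htrans hirr hchain (hTC_ne C hC)
    -- choose aC for each chain
    set g : {C // C ∈ P'} → V := fun C => (hTC_max C.1 C.2).choose with hg_def
    have hg_memT : ∀ C : {C // C ∈ P'}, g C ∈ T C.1 := fun C => (hTC_max C.1 C.2).choose_spec.1
    have hg_max : ∀ C : {C // C ∈ P'}, ∀ x ∈ T C.1, x ≠ g C → lt x (g C) :=
      fun C => (hTC_max C.1 C.2).choose_spec.2
    have hg_mem : ∀ C : {C // C ∈ P'}, g C ∈ C.1 := fun C => hTC_sub C.1 (hg_memT C)
    have hg_inj : Function.Injective g := by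
      intro C D h
      rcases eq_or_ne C.1 D.1 with h1 | h1
      · exact Subtype.ext h1
      · exact absurd (hg_mem D) (hP'.2.2 C.1 C.2 D.1 D.2 h1 (g D) (h ▸ hg_mem C))
    set Astar : Finset V := P'.attach.image g with hAstar_def
    have hAstar_card : Astar.card = d := by
      rw [hAstar_def, Finset.card_image_of_injective _ hg_inj, Finset.card_attach]
    have hAstar_mem : ∀ x ∈ Astar, ∃ C : {C // C ∈ P'}, g C = x := by
      intro x hx
      obtain ⟨C, _, hC⟩ := Finset.mem_image.1 hx
      exact ⟨C, hC⟩
    have hAstar_S' : Astar ⊆ S' := by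
      intro x hx
      obtain ⟨C, rfl⟩ := hAstar_mem x hx
      exact (hP'.1 C.1 C.2).1 (hg_mem C)
    -- key: no g C is strictly below g D  (for C ≠ D)
    have hkey : ∀ C D : {C // C ∈ P'}, ¬ lt (g C) (g D) := by
      intro C D hCD
      -- g D lies in a d-antichain B of S'
      have := hg_memT D
      rw [hT_def] at this
      obtain ⟨hgDC, B, hBS', hBanti, hBcard, hgDB⟩ := Finset.mem_filter.1 this
      -- B meets C.1
      obtain ⟨c, hcB, hcC⟩ := anti_meets hBanti hBS' hP' (hBcard.trans hd_def) C.1 C.2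
      have hcT : c ∈ T C.1 := Finset.mem_filter.2 ⟨hcC, B, hBS', hBanti, hBcard, hcB⟩
      have hclt : lt c (g D) := by
        rcases eq_or_ne c (g C) with rfl | hne
        · exact hCD
        · exact htrans (hg_max C c hcT hne) hCD
      have hcne : c ≠ g D := fun h => hirr (g D) (h ▸ hclt)
      exact (hBanti c hcB (g D) hgDB hcne).1 hclt
    have hAstar_anti : AntiF lt Astar := by
      intro u hu v hv _
      obtain ⟨C, rfl⟩ := hAstar_mem u hu
      obtain ⟨D, rfl⟩ := hAstar_mem v hv
      exact ⟨hkey C D, hkey D C⟩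
    have hmnotS' : m ∉ S' := fun h => (Finset.mem_erase.1 h).1 rfl
    have hS'S : S' ⊆ S := Finset.erase_subset _ _
    by_cases hcomp : ∃ x ∈ Astar, lt x m ∨ lt m x
    · -- Case 2: some aC comparable with m
      obtain ⟨x, hxAstar, hxcomp⟩ := hcomp
      obtain ⟨C, rfl⟩ := hAstar_mem x hxAstar
      have hlt : lt (g C) m := by
        rcases hxcomp with h | h
        · exact h
        · exact absurd h (hmmax (g C) (hS'S (hAstar_S' hxAstar)))
      set K : Finset V := insert m ((C : Finset V).filter (fun y => y = g C ∨ lt y (g C)))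
        with hK_def
      have hKfilter_lt : ∀ y ∈ (C : Finset V).filter (fun y => y = g C ∨ lt y (g C)),
          lt y m := by
        intro y hy
        rcases (Finset.mem_filter.1 hy).2 with rfl | h
        · exact hlt
        · exact htrans h hlt
      have hmK : m ∈ K := Finset.mem_insert_self _ _
      have hKS : K ⊆ S := by
        intro y hy
        rcases Finset.mem_insert.1 hy with rfl | hy
        · exact hmS
        · exact hS'S ((hP'.1 C.1 C.2).1 (Finset.mem_filter.1 hy).1)
      set S'' := S \ K with hS''def
      have hS''S' : S'' ⊆ S' := by
        intro y hy
        have := Finset.mem_sdiff.1 hy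
        refine Finset.mem_erase.2 ⟨?_, this.1⟩
        rintro rfl
        exact this.2 hmK
      have hS''lt : S''.card < n := by
        have hsub : S'' ⊆ S := Finset.sdiff_subset
        have hssub : S'' ⊂ S := ⟨hsub, fun h => (Finset.mem_sdiff.1 (h hmS)).2 hmK⟩
        have := Finset.card_lt_card hssub; omega
      obtain ⟨P'', A'', hP'', hA'', hA''S'', hA''card⟩ := ih _ hS''lt S'' rfl
      -- every antichain of S'' has < d elements
      have hwidth : ∀ B : Finset V, B ⊆ S'' → AntiF lt B → B.card < d := by
        intro B hBS'' hBanti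
        have hBS' : B ⊆ S' := hBS''.trans hS''S'
        have hle : B.card ≤ d := anti_card_le hBanti hBS' hP'
        rcases lt_or_eq_of_le hle with h | h
        · exact h
        · exfalso
          obtain ⟨c, hcB, hcC⟩ := anti_meets hBanti hBS' hP' h C.1 C.2
          have hcT : c ∈ T C.1 := Finset.mem_filter.2 ⟨hcC, B, hBS', hBanti, h, hcB⟩
          have hcK : c ∈ K := by
            refine Finset.mem_insert_of_mem (Finset.mem_filter.2 ⟨hcC, ?_⟩)
            rcases eq_or_ne c (g C) with rfl | hne
            · exact Or.inl rfl
            · exact Or.inr (hg_max C c hcT hne)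
          exact (Finset.mem_sdiff.1 (hBS'' hcB)).2 hcK
      have hP''lt : P''.card < d := by
        have := hwidth A'' hA''S'' hA''; omega
      have hKchain : ChainF lt K := by
        intro x hx y hy hxy
        rcases Finset.mem_insert.1 hx with hxm | hxf
        · rcases Finset.mem_insert.1 hy with hym | hyf
          · exact absurd (hxm.trans hym.symm) hxy
          · subst hxm; exact Or.inr (hKfilter_lt y hyf)
        · rcases Finset.mem_insert.1 hy with hym | hyf
          · subst hym; exact Or.inl (hKfilter_lt x hxf)
          · exact (hP'.1 C.1 C.2).2.2 x (Finset.mem_filter.1 hxf).1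
              y (Finset.mem_filter.1 hyf).1 hxy
      have hKnot : K ∉ P'' := by
        intro h
        have := (hP''.1 K h).1 hmK
        exact (Finset.mem_sdiff.1 this).2 hmK
      set P : Finset (Finset V) := insert K P'' with hPdef
      have hPpart : IsChainPart lt S P := by
        refine ⟨?_, ?_, ?_⟩
        · intro D hD
          rcases Finset.mem_insert.1 hD with rfl | hD
          · exact ⟨hKS, ⟨m, hmK⟩, hKchain⟩
          · obtain ⟨h1, h2, h3⟩ := hP''.1 D hD
            exact ⟨h1.trans Finset.sdiff_subset, h2, h3⟩
        · intro x hx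
          by_cases hxK : x ∈ K
          · exact ⟨K, Finset.mem_insert_self _ _, hxK⟩
          · obtain ⟨D, hD, hxD⟩ := hP''.2.1 x (Finset.mem_sdiff.2 ⟨hx, hxK⟩)
            exact ⟨D, Finset.mem_insert_of_mem hD, hxD⟩
        · have key : ∀ D ∈ P'', ∀ x, x ∈ K → x ∉ D := by
            intro D hD x hxK hxD
            exact (Finset.mem_sdiff.1 ((hP''.1 D hD).1 hxD)).2 hxK
          intro D₁ hD₁ D₂ hD₂ hne x hx₁ hx₂
          rcases Finset.mem_insert.1 hD₁ with rfl | hD₁ <;>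
            rcases Finset.mem_insert.1 hD₂ with rfl | hD₂
          · exact hne rfl
          · exact key D₂ hD₂ x hx₁ hx₂
          · exact key D₁ hD₁ x hx₂ hx₁
          · exact hP''.2.2 D₁ hD₁ D₂ hD₂ hne x hx₁ hx₂
      have hPcard : P.card = P''.card + 1 := Finset.card_insert_of_notMem hKnot
      -- A' is an antichain of S of size d;  d ≤ P.card ≤ d
      have hle1 : A'.card ≤ P.card := anti_card_le hA' (hA'S'.trans hS'S) hPpart
      refine ⟨P, A', hPpart, hA', hA'S'.trans hS'S, ?_⟩
      omega
    · -- Case 1: m incomparable with all of Astar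
      push_neg at hcomp
      have hmnotAstar : m ∉ Astar := fun h => hmnotS' (hAstar_S' h)
      set A : Finset V := insert m Astar with hAdef
      set P : Finset (Finset V) := insert {m} P' with hPdef
      have hmnot : ({m} : Finset V) ∉ P' := by
        intro h
        exact hmnotS' ((hP'.1 {m} h).1 (Finset.mem_singleton_self m))
      have hPpart : IsChainPart lt S P := by
        refine ⟨?_, ?_, ?_⟩
        · intro D hD
          rcases Finset.mem_insert.1 hD with rfl | hD
          · exact ⟨Finset.singleton_subset_iff.2 hmS, Finset.singleton_nonempty m,
              fun x hx y hy hxy => absurd (by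
                rw [Finset.mem_singleton] at hx hy; rw [hx, hy]) hxy⟩
          · obtain ⟨h1, h2, h3⟩ := hP'.1 D hD
            exact ⟨h1.trans hS'S, h2, h3⟩
        · intro x hx
          rcases eq_or_ne x m with rfl | hxm
          · exact ⟨{x}, Finset.mem_insert_self _ _, Finset.mem_singleton_self x⟩
          · obtain ⟨D, hD, hxD⟩ := hP'.2.1 x (Finset.mem_erase.2 ⟨hxm, hx⟩)
            exact ⟨D, Finset.mem_insert_of_mem hD, hxD⟩
        · have key : ∀ D ∈ P', ∀ x, x ∈ ({m} : Finset V) → x ∉ D := by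
            intro D hD x hx hxD
            rw [Finset.mem_singleton] at hx
            subst hx
            exact hmnotS' ((hP'.1 D hD).1 hxD)
          intro D₁ hD₁ D₂ hD₂ hne x hx₁ hx₂
          rcases Finset.mem_insert.1 hD₁ with rfl | hD₁ <;>
            rcases Finset.mem_insert.1 hD₂ with rfl | hD₂
          · exact hne rfl
          · exact key D₂ hD₂ x hx₁ hx₂
          · exact key D₁ hD₁ x hx₂ hx₁
          · exact hP'.2.2 D₁ hD₁ D₂ hD₂ hne x hx₁ hx₂
      have hAanti : AntiF lt A := by
        intro u hu v hv huv
        rcases Finset.mem_insert.1 hu with rfl | hu <;>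
          rcases Finset.mem_insert.1 hv with rfl | hv
        · exact absurd rfl huv
        · exact ⟨(hcomp v hv).2, (hcomp v hv).1⟩
        · exact ⟨(hcomp u hu).1, (hcomp u hu).2⟩
        · exact hAstar_anti u hu v hv huv
      refine ⟨P, A, hPpart, hAanti, ?_, ?_⟩
      · intro x hx
        rcases Finset.mem_insert.1 hx with rfl | hx
        · exact hmS
        · exact hS'S (hAstar_S' hx)
      · rw [hAdef, hPdef, Finset.card_insert_of_notMem hmnotAstar,
          Finset.card_insert_of_notMem hmnot, hAstar_card]


end Fulk

theorem fulkerson_width_eq_card_sub_matching [Fintype V] (E : V → V → Prop)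
    (hdag : ∀ v : V, ¬ Relation.TransGen E v v)
    (w : ℕ) (hw : IsWidth E w)
    (M : Finset (V × V)) (hM : IsReachMatching E M)
    (hmax : ∀ M' : Finset (V × V), IsReachMatching E M' → M'.card ≤ M.card) :
    w = Fintype.card V - M.card := by
  classical
  have htrans : Transitive (Relation.TransGen E) := fun _ _ _ h h' => h.trans h'
  have hirr : Irreflexive (Relation.TransGen E) := hdag
  have hequiv : ∀ A : Finset V, IsAntichainSet E A ↔ Fulk.AntiF (Relation.TransGen E) A := by
    intro A
    constructor
    · intro h u hu v hv huv
      obtain ⟨h1, h2⟩ := h u hu v hv huv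
      exact ⟨fun ht => h1 ht.to_reflTransGen, fun ht => h2 ht.to_reflTransGen⟩
    · intro h u hu v hv huv
      obtain ⟨h1, h2⟩ := h u hu v hv huv
      constructor
      · intro hr
        rcases Relation.reflTransGen_iff_eq_or_transGen.1 hr with h' | h'
        · exact huv h'.symm
        · exact h1 h'
      · intro hr
        rcases Relation.reflTransGen_iff_eq_or_transGen.1 hr with h' | h'
        · exact huv h'
        · exact h2 h'
  obtain ⟨⟨Aw, hAw, hAwcard⟩, hwmax⟩ := hw
  obtain ⟨PM, hPM, hPMcard, -⟩ :=
    Fulk.part_of_matching htrans hirr M.card M rfl Finset.univ ⟨hM.1, hM.2⟩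
      (fun p _ => ⟨Finset.mem_univ _, Finset.mem_univ _⟩)
  have h2 : w ≤ PM.card := by
    rw [← hAwcard]
    exact Fulk.anti_card_le ((hequiv Aw).1 hAw) (Finset.subset_univ _) hPM
  obtain ⟨P, A, hP, hA, hAS, hAcard⟩ :=
    Fulk.dilworth htrans hirr (Finset.univ : Finset V).card Finset.univ rfl
  obtain ⟨M0, hM0good, -, hM0card⟩ := Fulk.matching_of_part htrans hirr P Finset.univ hP
  have h4 : M0.card ≤ M.card := hmax M0 ⟨hM0good.1, hM0good.2⟩
  have h5 : A.card ≤ w := hwmax A ((hequiv A).2 hA)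
  have huniv : (Finset.univ : Finset V).card = Fintype.card V := Finset.card_univ
  omega
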